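/- Let k ≥ 1 and let B_k denote the Boolean lattice of all subsets of a k-element set (equivalently, the product of chains [1]^k). Then the codensity of the lattice of transfer systems on B_k satisfies ρ(Tr(B_k)) = (6^k − 5^k)/(3^k − 2^k)². Consequently, ρ(Tr(B_k)) tends to 0 as k tends to infinity. -/

import Mathlib

/-- A transfer system on a finite lattice `L` (with trivial group action): a partial order
refining `≤` which is closed under restriction. -/
structure TransferSystem (L : Type*) [Lattice L] : Type _ where
  rel : L → L → Prop
  refl : ∀ x, rel x x
  trans : ∀ {x y z}, rel x y → rel y z → rel x z
  le_of_rel : ∀ {x y}, rel x y → x ≤ y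
  restrict : ∀ {x y x'}, rel x y → x' ≤ y → rel (x ⊓ x') x'

namespace TransferSystem

variable {L : Type*} [Lattice L]

theorem ext' {S T : TransferSystem L} (h : S.rel = T.rel) : S = T := by
  cases S; cases T; simpa using h

instance : PartialOrder (TransferSystem L) where
  le S T := ∀ ⦃x y : L⦄, S.rel x y → T.rel x y
  le_refl S := fun _ _ h => h
  le_trans S T U h1 h2 := fun _ _ h => h2 (h1 h)
  le_antisymm S T h1 h2 :=
    ext' (by funext x y; exact propext ⟨fun h => h1 h, fun h => h2 h⟩)

/-- The intersection of a set of transfer systems. -/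
def sInfTS (s : Set (TransferSystem L)) : TransferSystem L where
  rel x y := x ≤ y ∧ ∀ T ∈ s, T.rel x y
  refl x := ⟨le_refl x, fun T _ => T.refl x⟩
  trans h1 h2 := ⟨h1.1.trans h2.1, fun T hT => T.trans (h1.2 T hT) (h2.2 T hT)⟩
  le_of_rel h := h.1
  restrict h hle := ⟨inf_le_right, fun T hT => T.restrict (h.2 T hT) hle⟩

instance : InfSet (TransferSystem L) := ⟨sInfTS⟩

theorem sInf_rel (s : Set (TransferSystem L)) (x y : L) :
    (sInf s).rel x y ↔ x ≤ y ∧ ∀ T ∈ s, T.rel x y := Iff.rfl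

/-- The complete lattice of transfer systems, ordered by refinement. -/
instance : CompleteLattice (TransferSystem L) :=
  completeLatticeOfInf _ (fun s =>
    ⟨fun T hT _ _ h => h.2 T hT,
     fun T hT _ _ h => ((sInf_rel s _ _).2 ⟨T.le_of_rel h, fun S hS => hT hS h⟩)⟩)

end TransferSystem

/-- The codensity `ρ` of (the reduced formal context of) a finite lattice `α`:
the number of pairs `(A, B)` with `A` join-irreducible, `B` meet-irreducible and `A ≰ B`,
divided by the product of the numbers of join-irreducibles and meet-irreducibles. -/
noncomputable def codensity (α : Type*) [Lattice α] : ℚ :=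
  (Nat.card {p : α × α // SupIrred p.1 ∧ InfIrred p.2 ∧ ¬ p.1 ≤ p.2} : ℚ) /
    ((Nat.card {a : α // SupIrred a} : ℚ) * (Nat.card {a : α // InfIrred a} : ℚ))
section Aux

namespace TransferSystem

variable {L : Type*} [Lattice L]

theorem le_def' {S T : TransferSystem L} : S ≤ T ↔ ∀ ⦃x y : L⦄, S.rel x y → T.rel x y :=
  Iff.rfl

/-- The transfer system generated by the single arrow `x → y`. -/
def gen (x y : L) : TransferSystem L where
  rel a b := a = b ∨ (b ≤ y ∧ a = b ⊓ x)
  refl a := Or.inl rfl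
  trans := by
    rintro a b c (rfl | ⟨hb, rfl⟩) (rfl | ⟨hc, rfl⟩)
    · exact Or.inl rfl
    · exact Or.inr ⟨hc, rfl⟩
    · exact Or.inr ⟨hb, rfl⟩
    · exact Or.inr ⟨hc, by rw [inf_assoc, inf_idem]⟩
  le_of_rel := by rintro a b (rfl | ⟨h, rfl⟩); exacts [le_rfl, inf_le_left]
  restrict := by
    rintro a b b' (rfl | ⟨hb, rfl⟩) hb'
    · exact Or.inl (inf_eq_right.2 hb')
    · exact Or.inr ⟨hb'.trans hb, by rw [inf_right_comm, inf_eq_right.2 hb']⟩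

theorem gen_rel_self {x y : L} (h : x ≤ y) : (gen x y).rel x y :=
  Or.inr ⟨le_rfl, (inf_eq_right.2 h).symm⟩

theorem gen_le_iff {x y : L} (h : x ≤ y) {T : TransferSystem L} :
    gen x y ≤ T ↔ T.rel x y := by
  constructor
  · exact fun hle => hle (gen_rel_self h)
  · intro hT
    rintro a b (rfl | ⟨hb, rfl⟩)
    · exact T.refl a
    · have := T.restrict hT hb
      rwa [inf_comm] at this

theorem isMin_gen_self (x : L) : IsMin (gen x x) := by
  intro S _
  rintro a b (rfl | ⟨hb, rfl⟩)
  · exact S.refl a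
  · rw [inf_eq_left.2 hb]; exact S.refl b

/-- `gen x y` with the top arrow removed. -/
def genBelow (x y : L) : TransferSystem L where
  rel a b := a = b ∨ (b ≤ y ∧ a = b ⊓ x ∧ b ≠ y)
  refl a := Or.inl rfl
  trans := by
    rintro a b c (rfl | ⟨hb, rfl, hb'⟩) (rfl | ⟨hc, rfl, hc'⟩)
    · exact Or.inl rfl
    · exact Or.inr ⟨hc, rfl, hc'⟩
    · exact Or.inr ⟨hb, rfl, hb'⟩
    · exact Or.inr ⟨hc, by rw [inf_assoc, inf_idem], hc'⟩
  le_of_rel := by rintro a b (rfl | ⟨h, rfl, _⟩); exacts [le_rfl, inf_le_left]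
  restrict := by
    rintro a b b' (rfl | ⟨hb, rfl, hbne⟩) hb'
    · exact Or.inl (inf_eq_right.2 hb')
    · refine Or.inr ⟨hb'.trans hb, by rw [inf_right_comm, inf_eq_right.2 hb'], ?_⟩
      rintro rfl
      exact hbne (le_antisymm hb hb')

theorem genBelow_le_gen (x y : L) : genBelow x y ≤ gen x y := by
  rintro a b (rfl | ⟨hb, rfl, _⟩)
  · exact Or.inl rfl
  · exact Or.inr ⟨hb, rfl⟩

theorem not_genBelow_rel {x y : L} (h : x < y) : ¬ (genBelow x y).rel x y := by
  rintro (rfl | ⟨_, _, hne⟩)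
  · exact h.ne rfl
  · exact hne rfl

theorem supIrred_gen {x y : L} (h : x < y) : SupIrred (gen x y) := by
  constructor
  · intro hm
    exact not_genBelow_rel h (hm (genBelow_le_gen x y) (gen_rel_self h.le))
  · intro b c hbc
    by_contra hcon
    push_neg at hcon
    obtain ⟨hb, hc⟩ := hcon
    have hble : b ≤ gen x y := hbc ▸ le_sup_left
    have hcle : c ≤ gen x y := hbc ▸ le_sup_right
    have key : ∀ S : TransferSystem L, S ≤ gen x y → S ≠ gen x y → S ≤ genBelow x y := by
      intro S hS hSne
      have hnotrel : ¬ S.rel x y := fun hrel =>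
        hSne (le_antisymm hS ((gen_le_iff h.le).2 hrel))
      rintro a bb hab
      rcases hS hab with rfl | ⟨hbb, rfl⟩
      · exact Or.inl rfl
      · rcases eq_or_ne bb y with rfl | hne
        · rw [inf_eq_right.2 h.le] at hab ⊢
          exact absurd hab hnotrel
        · exact Or.inr ⟨hbb, rfl, hne⟩
    have : gen x y ≤ genBelow x y := by
      rw [← hbc]
      exact sup_le (key b hble hb) (key c hcle hc)
    exact not_genBelow_rel h (this (gen_rel_self h.le))

theorem gen_inj {x y x' y' : L} (h : x < y) (h' : x' < y')
    (he : gen x y = gen x' y') : x = x' ∧ y = y' := by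
  have h1 : (gen x' y').rel x y := he ▸ gen_rel_self h.le
  have h2 : (gen x y).rel x' y' := he ▸ gen_rel_self h'.le
  rcases h1 with rfl | ⟨hy, hx⟩
  · exact absurd rfl h.ne
  rcases h2 with rfl | ⟨hy', hx'⟩
  · exact absurd rfl h'.ne
  have hyy : y = y' := le_antisymm hy hy'
  subst hyy
  constructor
  · rw [hx, hx', ← inf_assoc, inf_idem]
  · rfl

/-- The meet-irreducible transfer system associated to the arrow `x → y`. -/
def coGen (x y : L) : TransferSystem L where
  rel a b := a ≤ b ∧ (x ≤ a → y ≤ b → y ≤ a)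
  refl a := ⟨le_rfl, fun _ hy => hy⟩
  trans := by
    rintro a b c ⟨hab, hi1⟩ ⟨hbc, hi2⟩
    exact ⟨hab.trans hbc, fun hx hy => hi1 hx (hi2 (hx.trans hab) hy)⟩
  le_of_rel h := h.1
  restrict := by
    rintro a b b' ⟨hab, hi⟩ hb'
    refine ⟨inf_le_right, fun hx hy => ?_⟩
    exact le_inf (hi (hx.trans inf_le_left) (hy.trans hb')) hy

theorem not_coGen_rel {x y : L} (h : x < y) : ¬ (coGen x y).rel x y :=
  fun ⟨_, hi⟩ => h.not_ge (hi le_rfl le_rfl)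

theorem not_coGen_rel_iff {x y a b : L} (hab : a ≤ b) :
    ¬ (coGen x y).rel a b ↔ x ≤ a ∧ y ≤ b ∧ ¬ y ≤ a := by
  simp only [coGen, hab, true_and]
  push_neg
  rfl

theorem rel_of_coGen_le {x y a b : L} (hxy : x ≤ y) {S : TransferSystem L}
    (hS : coGen x y ≤ S) (hab : S.rel a b) (hx : x ≤ a) (hy : y ≤ b) (hna : ¬ y ≤ a) :
    S.rel x y := by
  have h1 : S.rel (a ⊓ y) y := S.restrict hab hy
  have h2 : (coGen x y).rel x (a ⊓ y) :=
    ⟨le_inf hx hxy, fun _ h2 => absurd (h2.trans inf_le_left) hna⟩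
  exact S.trans (hS h2) h1

theorem top_rel {a b : L} (h : a ≤ b) : (⊤ : TransferSystem L).rel a b := by
  have : (⊤ : TransferSystem L) = sInf ∅ := rfl
  rw [this]
  exact (sInf_rel ∅ a b).2 ⟨h, by simp⟩

theorem exists_rel_not_rel_of_not_le {S T : TransferSystem L} (h : ¬ S ≤ T) :
    ∃ u v, S.rel u v ∧ ¬ T.rel u v := by
  by_contra h'
  push_neg at h'
  exact h fun u v huv => h' u v huv

theorem infIrred_coGen {x y : L} (h : x < y) : InfIrred (coGen x y) := by
  constructor
  · intro hmax
    exact not_coGen_rel h (hmax le_top (top_rel h.le))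
  · intro b c hbc
    by_contra hcon
    push_neg at hcon
    obtain ⟨hb, hc⟩ := hcon
    have hble : coGen x y ≤ b := hbc ▸ inf_le_left
    have hcle : coGen x y ≤ c := hbc ▸ inf_le_right
    have key : ∀ S : TransferSystem L, coGen x y ≤ S → S ≠ coGen x y → S.rel x y := by
      intro S hle hne
      obtain ⟨u, v, huv, hnuv⟩ := exists_rel_not_rel_of_not_le
        (fun hh : S ≤ coGen x y => hne (le_antisymm hh hle))
      obtain ⟨hxu, hyv, hnyu⟩ := (not_coGen_rel_iff (S.le_of_rel huv)).1 hnuv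
      exact rel_of_coGen_le h.le hle huv hxu hyv hnyu
    have hbrel := key b hble hb
    have hcrel := key c hcle hc
    have : gen x y ≤ coGen x y := by
      rw [← hbc]
      exact le_inf ((gen_le_iff h.le).2 hbrel) ((gen_le_iff h.le).2 hcrel)
    exact not_coGen_rel h ((gen_le_iff h.le).1 this)

theorem coGen_inj {x y x' y' : L} (h : x < y) (h' : x' < y')
    (he : coGen x y = coGen x' y') : x = x' ∧ y = y' := by
  have h1 : ¬ (coGen x y).rel x' y' := he ▸ not_coGen_rel h'
  have h2 : ¬ (coGen x' y').rel x y := he.symm ▸ not_coGen_rel h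
  obtain ⟨ha1, hb1, _⟩ := (not_coGen_rel_iff h'.le).1 h1
  obtain ⟨ha2, hb2, _⟩ := (not_coGen_rel_iff h.le).1 h2
  exact ⟨le_antisymm ha1 ha2, le_antisymm hb1 hb2⟩

end TransferSystem

/-- Extraction of a sup-irreducible element from a finite sup. -/
theorem SupIrred.exists_finsetSup {α : Type*} [SemilatticeSup α] [OrderBot α]
    {ι : Type*} {a : α} (h : SupIrred a) :
    ∀ {s : Finset ι} {f : ι → α}, a = s.sup f → ∃ i ∈ s, a = f i := by
  classical
  intro s
  induction s using Finset.induction_on with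
  | empty =>
    intro f ha
    simp only [Finset.sup_empty] at ha
    exact absurd (ha ▸ isMin_bot) h.1
  | insert i s hx ih =>
    intro f ha
    rw [Finset.sup_insert] at ha
    rcases h.2 ha.symm with h1 | h2
    · exact ⟨i, Finset.mem_insert_self i s, h1.symm⟩
    · obtain ⟨j, hj, hje⟩ := ih h2.symm
      exact ⟨j, Finset.mem_insert_of_mem hj, hje⟩

/-- Extraction of an inf-irreducible element from a finite inf. -/
theorem InfIrred.exists_finsetInf {α : Type*} [SemilatticeInf α] [OrderTop α]
    {ι : Type*} {a : α} (h : InfIrred a) :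
    ∀ {s : Finset ι} {f : ι → α}, a = s.inf f → ∃ i ∈ s, a = f i := by
  classical
  intro s
  induction s using Finset.induction_on with
  | empty =>
    intro f ha
    simp only [Finset.inf_empty] at ha
    exact absurd (ha ▸ isMax_top) h.1
  | insert i s hx ih =>
    intro f ha
    rw [Finset.inf_insert] at ha
    rcases h.2 ha.symm with h1 | h2
    · exact ⟨i, Finset.mem_insert_self i s, h1.symm⟩
    · obtain ⟨j, hj, hje⟩ := ih h2.symm
      exact ⟨j, Finset.mem_insert_of_mem hj, hje⟩

end Aux
section Aux2

namespace TransferSystem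

variable {L : Type*} [Lattice L]

theorem eq_finsetSup [Fintype L] [DecidableEq L] (T : TransferSystem L) :
    ∃ s : Finset (L × L), (∀ p ∈ s, T.rel p.1 p.2) ∧
      T = s.sup (fun p => gen p.1 p.2) := by
  classical
  refine ⟨Finset.univ.filter (fun p : L × L => T.rel p.1 p.2), fun p hp => ?_, ?_⟩
  · exact (Finset.mem_filter.1 hp).2
  · apply le_antisymm
    · intro u v huv
      have hmem : (u, v) ∈ Finset.univ.filter (fun p : L × L => T.rel p.1 p.2) :=
        Finset.mem_filter.2 ⟨Finset.mem_univ _, huv⟩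
      exact Finset.le_sup (f := fun p : L × L => gen p.1 p.2) hmem
        (gen_rel_self (T.le_of_rel huv))
    · refine Finset.sup_le fun p hp => ?_
      have hrel := (Finset.mem_filter.1 hp).2
      exact (gen_le_iff (T.le_of_rel hrel)).2 hrel

theorem exists_of_supIrred [Fintype L] [DecidableEq L] {T : TransferSystem L}
    (h : SupIrred T) : ∃ x y : L, x < y ∧ T = gen x y := by
  obtain ⟨s, hs, hT⟩ := T.eq_finsetSup
  obtain ⟨p, hp, hpe⟩ := h.exists_finsetSup hT
  have hle : p.1 ≤ p.2 := T.le_of_rel (hs p hp)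
  rcases eq_or_lt_of_le hle with heq | hlt
  · rw [heq] at hpe
    exact absurd (hpe ▸ isMin_gen_self p.2) h.1
  · exact ⟨p.1, p.2, hlt, hpe⟩

end TransferSystem

open TransferSystem in
theorem TransferSystem.exists_coGen_le {k : ℕ} (T : TransferSystem (Finset (Fin k))) :
    ∀ (n : ℕ) (b a : Finset (Fin k)), b.card ≤ n → a ≤ b → ¬ T.rel a b →
      ∃ x y, x < y ∧ T ≤ coGen x y ∧ x ≤ a ∧ y ≤ b ∧ ¬ y ≤ a := by
  intro n
  induction n with
  | zero =>
    intro b a hb hab hrel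
    interval_cases hcard : b.card
    · rw [Finset.card_eq_zero] at hcard
      subst hcard
      rw [Finset.le_iff_subset, Finset.subset_empty] at hab
      exact absurd (hab ▸ T.refl ∅) hrel
  | succ n ih =>
    intro b a hb hab hrel
    by_cases hc : ∃ c, a ≤ c ∧ c < b ∧ T.rel c b
    · obtain ⟨c, hac, hcb, hcrel⟩ := hc
      have hnac : ¬ T.rel a c := fun hh => hrel (T.trans hh hcrel)
      have hcn : c.card ≤ n := by
        have := Finset.card_lt_card hcb
        omega
      obtain ⟨x, y, hxy, hTle, hxa, hyc, hnya⟩ := ih c a hcn hac hnac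
      exact ⟨x, y, hxy, hTle, hxa, hyc.trans hcb.le, hnya⟩
    · push_neg at hc
      have hne : a ≠ b := fun he => hrel (he ▸ T.refl a)
      refine ⟨a, b, lt_of_le_of_ne hab hne, ?_, le_rfl, le_rfl, ?_⟩
      · intro u v huv
        refine ⟨T.le_of_rel huv, fun hau hbv => ?_⟩
        by_contra hbu
        have h1 : T.rel (u ⊓ b) b := T.restrict huv hbv
        have h2 : a ≤ u ⊓ b := le_inf hau hab
        have h3 : u ⊓ b < b := by
          refine lt_of_le_of_ne inf_le_right fun he => hbu ?_
          rw [← he]; exact inf_le_left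
        exact hc (u ⊓ b) h2 h3 h1
      · intro hba
        exact hne (le_antisymm hab hba)

open TransferSystem in
theorem TransferSystem.exists_of_infIrred {k : ℕ} {T : TransferSystem (Finset (Fin k))}
    (h : InfIrred T) : ∃ x y : Finset (Fin k), x < y ∧ T = coGen x y := by
  classical
  set s : Finset (Finset (Fin k) × Finset (Fin k)) :=
    Finset.univ.filter (fun p => p.1 < p.2 ∧ T ≤ coGen p.1 p.2) with hs
  have hT : T = s.inf (fun p => coGen p.1 p.2) := by
    apply le_antisymm
    · exact Finset.le_inf fun p hp => (Finset.mem_filter.1 hp).2.2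
    · intro u v huv
      by_contra hTuv
      have huvle : u ≤ v := (s.inf (fun p => coGen p.1 p.2)).le_of_rel huv
      obtain ⟨x, y, hxy, hTle, hxu, hyv, hnyu⟩ :=
        T.exists_coGen_le v.card v u le_rfl huvle hTuv
      have hmem : (x, y) ∈ s := Finset.mem_filter.2 ⟨Finset.mem_univ _, hxy, hTle⟩
      have : (coGen x y).rel u v :=
        Finset.inf_le (f := fun p : _ × _ => coGen p.1 p.2) hmem huv
      exact ((not_coGen_rel_iff huvle).2 ⟨hxu, hyv, hnyu⟩) this
  obtain ⟨p, hp, hpe⟩ := h.exists_finsetInf hT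
  exact ⟨p.1, p.2, (Finset.mem_filter.1 hp).2.1, hpe⟩

end Aux2
section Aux3

/-- Generic count of functions with all values satisfying `P` and some value equal to `w0`. -/
theorem card_forall_exists {W : Type*} [Fintype W] [DecidableEq W] {n : ℕ}
    (P : W → Prop) [DecidablePred P] (w0 : W) (hw0 : P w0) :
    Nat.card {f : Fin n → W // (∀ i, P (f i)) ∧ ∃ i, f i = w0} =
      Fintype.card {w : W // P w} ^ n - Fintype.card {w : W // P w ∧ w ≠ w0} ^ n := by
  classical
  have e1 : {f : Fin n → W // (∀ i, P (f i)) ∧ ∃ i, f i = w0} ≃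
      {g : Fin n → {w : W // P w} // ∃ i, g i = ⟨w0, hw0⟩} :=
    { toFun := fun f => ⟨fun i => ⟨f.1 i, f.2.1 i⟩, by
        obtain ⟨i, hi⟩ := f.2.2
        exact ⟨i, Subtype.ext hi⟩⟩
      invFun := fun g => ⟨fun i => (g.1 i).1, fun i => (g.1 i).2, by
        obtain ⟨i, hi⟩ := g.2
        exact ⟨i, congrArg Subtype.val hi⟩⟩
      left_inv := fun f => Subtype.ext rfl
      right_inv := fun g => Subtype.ext (funext fun i => Subtype.ext rfl) }
  rw [Nat.card_congr e1, Nat.card_eq_fintype_card]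
  have e2 : {g : Fin n → {w : W // P w} // ¬ ∃ i, g i = ⟨w0, hw0⟩} ≃
      (Fin n → {v : {w : W // P w} // v ≠ ⟨w0, hw0⟩}) :=
    (Equiv.subtypeEquivRight (fun g => by push_neg; rfl)).trans Equiv.subtypePiEquivPi
  have h2 : Fintype.card {g : Fin n → {w : W // P w} // ¬ ∃ i, g i = ⟨w0, hw0⟩} =
      Fintype.card {w : W // P w ∧ w ≠ w0} ^ n := by
    rw [Fintype.card_congr e2, Fintype.card_fun, Fintype.card_fin]
    congr 1
    refine Fintype.card_congr ((Equiv.subtypeEquivRight fun v => not_congr Subtype.ext_iff).trans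
      (Equiv.subtypeSubtypeEquivSubtypeInter P (· ≠ w0)))
  have h4 : Fintype.card (Fin n → {w : W // P w}) = Fintype.card {w : W // P w} ^ n := by
    rw [Fintype.card_fun, Fintype.card_fin]
  have hsum : Fintype.card {g : Fin n → {w : W // P w} // ∃ i, g i = ⟨w0, hw0⟩} +
      Fintype.card {g : Fin n → {w : W // P w} // ¬ ∃ i, g i = ⟨w0, hw0⟩} =
      Fintype.card (Fin n → {w : W // P w}) := by
    rw [← Fintype.card_sum]
    exact Fintype.card_congr (Equiv.sumCompl _)
  rw [h4, h2] at hsum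
  exact eq_tsub_of_add_eq hsum

/-- Strict pairs of finsets as boolean functions. -/
def pairEquiv (k : ℕ) : {p : Finset (Fin k) × Finset (Fin k) // p.1 < p.2} ≃
    {f : Fin k → Bool × Bool //
      (∀ i, (f i).1 = true → (f i).2 = true) ∧ ∃ i, f i = (false, true)} where
  toFun p := ⟨fun i => (decide (i ∈ p.1.1), decide (i ∈ p.1.2)), by
    obtain ⟨⟨x, y⟩, hlt⟩ := p
    have hsub : x ⊆ y := hlt.le
    constructor
    · intro i h1
      simp only [decide_eq_true_eq] at h1 ⊢
      exact hsub h1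
    · obtain ⟨i, hiy, hix⟩ := Finset.exists_of_ssubset hlt
      exact ⟨i, by simp [hix, hiy]⟩⟩
  invFun f := ⟨(Finset.univ.filter fun i => (f.1 i).1 = true,
                Finset.univ.filter fun i => (f.1 i).2 = true), by
    obtain ⟨f, hP, i, hi⟩ := f
    have hsub : (Finset.univ.filter fun i => (f i).1 = true) ⊆
        Finset.univ.filter fun i => (f i).2 = true := by
      intro j hj
      simp only [Finset.mem_filter, Finset.mem_univ, true_and] at hj ⊢
      exact hP j hj
    rw [show ((Finset.univ.filter fun i => (f i).1 = true) <
        Finset.univ.filter fun i => (f i).2 = true) ↔ _ from Iff.rfl,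
      Finset.lt_iff_ssubset, Finset.ssubset_iff_of_subset hsub]
    exact ⟨i, by simp [hi], by simp [hi]⟩⟩
  left_inv p := by
    refine Subtype.ext (Prod.ext ?_ ?_) <;> · ext i; simp
  right_inv f := by
    refine Subtype.ext (funext fun i => Prod.ext ?_ ?_) <;>
      simp only [Finset.mem_filter, Finset.mem_univ, true_and, decide_eq_true_eq] <;>
      · cases h : ((f.1 i).1) <;> cases h2 : ((f.1 i).2) <;> simp_all

/-- Admissible quadruples of finsets as boolean functions. -/
def quadEquiv (k : ℕ) :
    {q : (Finset (Fin k) × Finset (Fin k)) × (Finset (Fin k) × Finset (Fin k)) //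
      q.1.1 < q.1.2 ∧ q.2.1 < q.2.2 ∧ q.2.1 ≤ q.1.1 ∧ q.2.2 ≤ q.1.2 ∧ ¬ q.2.2 ≤ q.1.1} ≃
    {f : Fin k → (Bool × Bool) × (Bool × Bool) //
      (∀ i, ((f i).1.1 = true → (f i).1.2 = true) ∧ ((f i).2.1 = true → (f i).2.2 = true) ∧
            ((f i).2.1 = true → (f i).1.1 = true) ∧ ((f i).2.2 = true → (f i).1.2 = true)) ∧
      ∃ i, f i = ((false, true), (false, true))} where
  toFun q := ⟨fun i => ((decide (i ∈ q.1.1.1), decide (i ∈ q.1.1.2)),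
                        (decide (i ∈ q.1.2.1), decide (i ∈ q.1.2.2))), by
    obtain ⟨⟨⟨a, b⟩, ⟨x, y⟩⟩, hab, hxy, hxa, hyb, hnya⟩ := q
    have hab' : a ⊆ b := hab.le
    have hxy' : x ⊆ y := hxy.le
    have hxa' : x ⊆ a := hxa
    have hyb' : y ⊆ b := hyb
    constructor
    · intro i
      simp only [decide_eq_true_eq]
      exact ⟨fun h => hab' h, fun h => hxy' h, fun h => hxa' h, fun h => hyb' h⟩
    · rw [Finset.le_iff_subset, Finset.not_subset] at hnya
      obtain ⟨i, hiy, hia⟩ := hnya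
      have hix : i ∉ x := fun h => hia (hxa' h)
      have hib : i ∈ b := hyb' hiy
      exact ⟨i, by simp [hia, hib, hix, hiy]⟩⟩
  invFun f := ⟨((Finset.univ.filter fun i => (f.1 i).1.1 = true,
                 Finset.univ.filter fun i => (f.1 i).1.2 = true),
                (Finset.univ.filter fun i => (f.1 i).2.1 = true,
                 Finset.univ.filter fun i => (f.1 i).2.2 = true)), by
    obtain ⟨f, hP, i0, hi0⟩ := f
    have sub1 : ∀ (g h : Fin k → Bool), (∀ j, g j = true → h j = true) →
        (Finset.univ.filter fun i => g i = true) ⊆ Finset.univ.filter fun i => h i = true := by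
      intro g h hgh j hj
      simp only [Finset.mem_filter, Finset.mem_univ, true_and] at hj ⊢
      exact hgh j hj
    have hab : (Finset.univ.filter fun i => (f i).1.1 = true) ⊆
        Finset.univ.filter fun i => (f i).1.2 = true := sub1 _ _ fun j => (hP j).1
    have hxy : (Finset.univ.filter fun i => (f i).2.1 = true) ⊆
        Finset.univ.filter fun i => (f i).2.2 = true := sub1 _ _ fun j => (hP j).2.1
    have hxa : (Finset.univ.filter fun i => (f i).2.1 = true) ⊆
        Finset.univ.filter fun i => (f i).1.1 = true := sub1 _ _ fun j => (hP j).2.2.1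
    have hyb : (Finset.univ.filter fun i => (f i).2.2 = true) ⊆
        Finset.univ.filter fun i => (f i).1.2 = true := sub1 _ _ fun j => (hP j).2.2.2
    have hmem : i0 ∈ (Finset.univ.filter fun i => (f i).2.2 = true) ∧
        i0 ∉ (Finset.univ.filter fun i => (f i).1.1 = true) := by
      constructor <;> simp [hi0]
    refine ⟨?_, ?_, hxa, hyb, ?_⟩
    · rw [Finset.lt_iff_ssubset, Finset.ssubset_iff_of_subset hab]
      exact ⟨i0, by simp [hi0], by simp [hi0]⟩
    · rw [Finset.lt_iff_ssubset, Finset.ssubset_iff_of_subset hxy]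
      exact ⟨i0, by simp [hi0], by simp [hi0]⟩
    · rw [Finset.le_iff_subset, Finset.not_subset]
      exact ⟨i0, hmem.1, hmem.2⟩⟩
  left_inv q := by
    refine Subtype.ext (Prod.ext (Prod.ext ?_ ?_) (Prod.ext ?_ ?_)) <;> · ext i; simp
  right_inv f := by
    refine Subtype.ext (funext fun i => ?_)
    have h1 := (f.2.1 i).1
    have h2 := (f.2.1 i).2.1
    have h3 := (f.2.1 i).2.2.1
    have h4 := (f.2.1 i).2.2.2
    refine Prod.ext (Prod.ext ?_ ?_) (Prod.ext ?_ ?_) <;>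
      simp only [Finset.mem_filter, Finset.mem_univ, true_and, decide_eq_true_eq] <;>
      · cases h : ((f.1 i).1.1) <;> cases hh : ((f.1 i).1.2) <;>
        cases h' : ((f.1 i).2.1) <;> cases hh' : ((f.1 i).2.2) <;> simp_all

theorem card_strict_pairs (k : ℕ) :
    Nat.card {p : Finset (Fin k) × Finset (Fin k) // p.1 < p.2} = 3 ^ k - 2 ^ k := by
  rw [Nat.card_congr (pairEquiv k),
    card_forall_exists (fun w : Bool × Bool => w.1 = true → w.2 = true) (false, true)
      (by simp)]
  norm_num [show Fintype.card {w : Bool × Bool // w.1 = true → w.2 = true} = 3 from by decide,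
    show Fintype.card {w : Bool × Bool // (w.1 = true → w.2 = true) ∧ w ≠ (false, true)} = 2
      from by decide]

theorem card_quads (k : ℕ) :
    Nat.card {q : (Finset (Fin k) × Finset (Fin k)) × (Finset (Fin k) × Finset (Fin k)) //
      q.1.1 < q.1.2 ∧ q.2.1 < q.2.2 ∧ q.2.1 ≤ q.1.1 ∧ q.2.2 ≤ q.1.2 ∧ ¬ q.2.2 ≤ q.1.1} =
      6 ^ k - 5 ^ k := by
  rw [Nat.card_congr (quadEquiv k),
    card_forall_exists (fun w : (Bool × Bool) × (Bool × Bool) =>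
      (w.1.1 = true → w.1.2 = true) ∧ (w.2.1 = true → w.2.2 = true) ∧
      (w.2.1 = true → w.1.1 = true) ∧ (w.2.2 = true → w.1.2 = true))
      ((false, true), (false, true)) (by simp)]
  norm_num [show Fintype.card {w : (Bool × Bool) × (Bool × Bool) //
      (w.1.1 = true → w.1.2 = true) ∧ (w.2.1 = true → w.2.2 = true) ∧
      (w.2.1 = true → w.1.1 = true) ∧ (w.2.2 = true → w.1.2 = true)} = 6 from by decide,
    show Fintype.card {w : (Bool × Bool) × (Bool × Bool) //
      ((w.1.1 = true → w.1.2 = true) ∧ (w.2.1 = true → w.2.2 = true) ∧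
      (w.2.1 = true → w.1.1 = true) ∧ (w.2.2 = true → w.1.2 = true)) ∧
      w ≠ ((false, true), (false, true))} = 5 from by decide]

end Aux3
section Aux4

open TransferSystem

theorem card_supIrred (k : ℕ) :
    Nat.card {T : TransferSystem (Finset (Fin k)) // SupIrred T} = 3 ^ k - 2 ^ k := by
  have e : {p : Finset (Fin k) × Finset (Fin k) // p.1 < p.2} ≃
      {T : TransferSystem (Finset (Fin k)) // SupIrred T} := by
    refine Equiv.ofBijective
      (fun p => ⟨gen p.1.1 p.1.2, supIrred_gen p.2⟩) ⟨?_, ?_⟩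
    · rintro ⟨⟨x, y⟩, h⟩ ⟨⟨x', y'⟩, h'⟩ he
      obtain ⟨h1, h2⟩ := gen_inj h h' (congrArg Subtype.val he)
      exact Subtype.ext (Prod.ext h1 h2)
    · rintro ⟨T, hT⟩
      obtain ⟨x, y, hlt, he⟩ := exists_of_supIrred hT
      exact ⟨⟨(x, y), hlt⟩, Subtype.ext he.symm⟩
  rw [← Nat.card_congr e, card_strict_pairs]

theorem card_infIrred (k : ℕ) :
    Nat.card {T : TransferSystem (Finset (Fin k)) // InfIrred T} = 3 ^ k - 2 ^ k := by
  have e : {p : Finset (Fin k) × Finset (Fin k) // p.1 < p.2} ≃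
      {T : TransferSystem (Finset (Fin k)) // InfIrred T} := by
    refine Equiv.ofBijective
      (fun p => ⟨coGen p.1.1 p.1.2, infIrred_coGen p.2⟩) ⟨?_, ?_⟩
    · rintro ⟨⟨x, y⟩, h⟩ ⟨⟨x', y'⟩, h'⟩ he
      obtain ⟨h1, h2⟩ := coGen_inj h h' (congrArg Subtype.val he)
      exact Subtype.ext (Prod.ext h1 h2)
    · rintro ⟨T, hT⟩
      obtain ⟨x, y, hlt, he⟩ := TransferSystem.exists_of_infIrred hT
      exact ⟨⟨(x, y), hlt⟩, Subtype.ext he.symm⟩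
  rw [← Nat.card_congr e, card_strict_pairs]

theorem not_gen_le_coGen_iff {L : Type*} [Lattice L] {a b x y : L} (hab : a ≤ b) :
    ¬ gen a b ≤ coGen x y ↔ x ≤ a ∧ y ≤ b ∧ ¬ y ≤ a :=
  (not_congr (gen_le_iff hab)).trans (not_coGen_rel_iff hab)

theorem card_numerator (k : ℕ) :
    Nat.card {p : TransferSystem (Finset (Fin k)) × TransferSystem (Finset (Fin k)) //
      SupIrred p.1 ∧ InfIrred p.2 ∧ ¬ p.1 ≤ p.2} = 6 ^ k - 5 ^ k := by
  have e : {q : (Finset (Fin k) × Finset (Fin k)) × (Finset (Fin k) × Finset (Fin k)) //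
      q.1.1 < q.1.2 ∧ q.2.1 < q.2.2 ∧ q.2.1 ≤ q.1.1 ∧ q.2.2 ≤ q.1.2 ∧ ¬ q.2.2 ≤ q.1.1} ≃
      {p : TransferSystem (Finset (Fin k)) × TransferSystem (Finset (Fin k)) //
        SupIrred p.1 ∧ InfIrred p.2 ∧ ¬ p.1 ≤ p.2} := by
    refine Equiv.ofBijective (fun q =>
      ⟨(gen q.1.1.1 q.1.1.2, coGen q.1.2.1 q.1.2.2),
        supIrred_gen q.2.1, infIrred_coGen q.2.2.1,
        (not_gen_le_coGen_iff q.2.1.le).2 ⟨q.2.2.2.1, q.2.2.2.2.1, q.2.2.2.2.2⟩⟩) ⟨?_, ?_⟩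
    · intro q q' he
      have he' := congrArg Subtype.val he
      have h1 : gen q.1.1.1 q.1.1.2 = gen q'.1.1.1 q'.1.1.2 := congrArg Prod.fst he'
      have h2 : coGen q.1.2.1 q.1.2.2 = coGen q'.1.2.1 q'.1.2.2 := congrArg Prod.snd he'
      obtain ⟨ha, hb⟩ := gen_inj q.2.1 q'.2.1 h1
      obtain ⟨hx, hy⟩ := coGen_inj q.2.2.1 q'.2.2.1 h2
      exact Subtype.ext (Prod.ext (Prod.ext ha hb) (Prod.ext hx hy))
    · rintro ⟨⟨S, M⟩, hS, hM, hle⟩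
      obtain ⟨a, b, hab, rfl⟩ := exists_of_supIrred hS
      obtain ⟨x, y, hxy, rfl⟩ := TransferSystem.exists_of_infIrred hM
      obtain ⟨h1, h2, h3⟩ := (not_gen_le_coGen_iff hab.le).1 hle
      exact ⟨⟨((a, b), (x, y)), hab, hxy, h1, h2, h3⟩, rfl⟩
  rw [← Nat.card_congr e, card_quads]

theorem codensity_formula (k : ℕ) :
    codensity (TransferSystem (Finset (Fin k))) =
      ((6 : ℚ) ^ k - 5 ^ k) / ((3 : ℚ) ^ k - 2 ^ k) ^ 2 := by
  unfold codensity
  rw [card_numerator k, card_supIrred k, card_infIrred k]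
  have h65 : (5 : ℕ) ^ k ≤ 6 ^ k := Nat.pow_le_pow_left (by norm_num) k
  have h32 : (2 : ℕ) ^ k ≤ 3 ^ k := Nat.pow_le_pow_left (by norm_num) k
  rw [Nat.cast_sub h65, Nat.cast_sub h32]
  push_cast
  rw [sq]

theorem three_two_aux : ∀ k : ℕ, 1 ≤ k → 3 * 2 ^ k ≤ 2 * 3 ^ k := by
  intro k hk
  induction k with
  | zero => omega
  | succ n ih =>
    rcases Nat.eq_zero_or_pos n with rfl | hn
    · norm_num
    · have h1 := ih hn
      have h2 : (1:ℕ) ≤ 3 ^ n := Nat.one_le_pow _ _ (by norm_num)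
      calc 3 * 2 ^ (n + 1) = 2 * (3 * 2 ^ n) := by ring
        _ ≤ 2 * (2 * 3 ^ n) := Nat.mul_le_mul_left _ h1
        _ ≤ 2 * 3 ^ (n + 1) := by rw [pow_succ]; nlinarith

end Aux4
/-- For the Boolean lattice `B_k` of subsets of a `k`-element set,
`ρ(Tr(B_k)) = (6^k - 5^k)/(3^k - 2^k)²`; consequently `ρ(Tr(B_k)) → 0` as `k → ∞`. -/
theorem codensity_boolean :
    (∀ k : ℕ, 1 ≤ k →
      codensity (TransferSystem (Finset (Fin k))) =
        ((6 : ℚ) ^ k - 5 ^ k) / ((3 : ℚ) ^ k - 2 ^ k) ^ 2) ∧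
    Filter.Tendsto (fun k : ℕ => codensity (TransferSystem (Finset (Fin k))))
      Filter.atTop (nhds (0 : ℚ)) := by
  constructor
  · intro k _
    exact codensity_formula k
  · have hfun : (fun k : ℕ => codensity (TransferSystem (Finset (Fin k)))) =
        fun k : ℕ => ((6 : ℚ) ^ k - 5 ^ k) / ((3 : ℚ) ^ k - 2 ^ k) ^ 2 :=
      funext codensity_formula
    rw [hfun]
    have htop : Filter.Tendsto (fun k : ℕ => (9 : ℚ) * (2 / 3) ^ k) Filter.atTop (nhds 0) := by
      have := (tendsto_pow_atTop_nhds_zero_of_lt_one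
        (show (0 : ℚ) ≤ 2 / 3 by norm_num) (show (2 / 3 : ℚ) < 1 by norm_num)).const_mul (9 : ℚ)
      simpa using this
    refine tendsto_of_tendsto_of_tendsto_of_le_of_le' tendsto_const_nhds htop ?_ ?_
    · refine Filter.Eventually.of_forall fun k => ?_
      have h1 : (5 : ℚ) ^ k ≤ 6 ^ k := pow_le_pow_left₀ (by norm_num) (by norm_num) k
      exact div_nonneg (sub_nonneg.2 h1) (sq_nonneg _)
    · rw [Filter.eventually_atTop]
      refine ⟨1, fun k hk => ?_⟩
      have h3pos : (0 : ℚ) < 3 ^ k := by positivity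
      have hD : (1 / 3 : ℚ) * 3 ^ k ≤ 3 ^ k - 2 ^ k := by
        have hn := three_two_aux k hk
        have hq : (3 : ℚ) * 2 ^ k ≤ 2 * 3 ^ k := by exact_mod_cast hn
        linarith
      have hDpos : (0 : ℚ) < (1 / 3) * 3 ^ k := by positivity
      have h65 : (6 : ℚ) ^ k - 5 ^ k ≤ 6 ^ k := by
        have : (0 : ℚ) ≤ 5 ^ k := by positivity
        linarith
      have hb : ((1 / 3 : ℚ) * 3 ^ k) ^ 2 ≤ ((3 : ℚ) ^ k - 2 ^ k) ^ 2 :=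
        pow_le_pow_left₀ hDpos.le hD 2
      have hmain : ((6 : ℚ) ^ k - 5 ^ k) / ((3 : ℚ) ^ k - 2 ^ k) ^ 2 ≤
          (6 : ℚ) ^ k / ((1 / 3 : ℚ) * 3 ^ k) ^ 2 :=
        div_le_div₀ (by positivity) h65 (by positivity) hb
      refine hmain.trans_eq ?_
      have h3ne : (3 : ℚ) ^ k ≠ 0 := h3pos.ne'
      have h6 : (6 : ℚ) ^ k = 2 ^ k * 3 ^ k := by rw [← mul_pow]; norm_num
      rw [h6, div_pow]
      field_simp
      ring
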